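/- For a graphical source, if P* is the fundamental partition (finest minimizer of I_P) and A ∈ P* is a cell with |A| ≥ 2, then there exists at least one edge e ∈ E with e ⊆ A. -/

import Mathlib

open Finset
open scoped Classical

/-- `I_P(x) = (1/(|P|-1)) ∑_{e ∈ E_P} x e`, `E_P` = edges crossing the partition `P`. -/
noncomputable def IP {M : Type*} [Fintype M] [DecidableEq M] (x : Finset M → ℝ)
    (P : Finpartition (Finset.univ : Finset M)) : ℝ :=
  ((P.parts.card : ℝ) - 1)⁻¹ *
    ∑ e ∈ Finset.univ.filter (fun e : Finset M => ¬ ∃ A ∈ P.parts, e ⊆ A), x e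

/-- For a graphical source with fundamental partition `P*` (a minimizer of
`I_P`, finest among minimizers), every cell `A ∈ P*` with `|A| ≥ 2` contains at least one
edge `e ∈ E` (i.e., some `e` with `w e > 0` and `e ⊆ A`). -/
theorem cell_contains_edge {M : Type*} [Fintype M] [DecidableEq M]
    (hm : 2 ≤ Fintype.card M)
    (w : Finset M → ℝ) (hw : ∀ e, 0 ≤ w e)
    (h2 : ∀ e, 0 < w e → e.card = 2)
    (Pstar : Finpartition (Finset.univ : Finset M)) (hcard : 2 ≤ Pstar.parts.card)
    (hmin : ∀ Q : Finpartition (Finset.univ : Finset M),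
      2 ≤ Q.parts.card → IP w Pstar ≤ IP w Q)
    (hfinest : ∀ Q : Finpartition (Finset.univ : Finset M),
      2 ≤ Q.parts.card → IP w Q = IP w Pstar → Pstar ≤ Q)
    (A : Finset M) (hA : A ∈ Pstar.parts) (hA2 : 2 ≤ A.card) :
    ∃ e : Finset M, 0 < w e ∧ e ⊆ A := by
  by_contra hno
  push_neg at hno
  -- every subset of A has weight 0
  have hw0 : ∀ e : Finset M, e ⊆ A → w e = 0 := by
    intro e he
    rcases lt_or_eq_of_le (hw e) with h | h
    · exact absurd he (hno e h)
    · exact h.symm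
  obtain ⟨a, ha⟩ := Finset.card_pos.mp (by omega : 0 < A.card)
  set A1 : Finset M := {a} with hA1def
  set A2 : Finset M := A.erase a with hA2def
  have hA1sub : A1 ⊆ A := by simp [hA1def, ha]
  have hA2sub : A2 ⊆ A := Finset.erase_subset _ _
  have hA2card : A2.card = A.card - 1 := Finset.card_erase_of_mem ha
  have hA2ne : A2.Nonempty := Finset.card_pos.mp (by omega)
  have hA1A2 : Disjoint A1 A2 := by
    simp [hA1def, hA2def, Finset.disjoint_left]
  have hunion : A1 ∪ A2 = A := by
    ext x
    simp only [hA1def, hA2def, Finset.mem_union, Finset.mem_singleton, Finset.mem_erase]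
    constructor
    · rintro (rfl | ⟨_, h⟩) <;> simp_all
    · intro hx
      by_cases hxa : x = a <;> simp_all
  set partsQ : Finset (Finset M) := insert A1 (insert A2 (Pstar.parts.erase A))
    with hpartsQ
  -- any old part ≠ A is disjoint from A
  have hdisjA : ∀ B ∈ Pstar.parts.erase A, Disjoint A B := by
    intro B hB
    rw [Finset.mem_erase] at hB
    exact Pstar.disjoint hA hB.2 (Ne.symm hB.1)
  have hmemQ : ∀ x ∈ partsQ, x = A1 ∨ x = A2 ∨ x ∈ Pstar.parts.erase A := by
    intro x hx
    simp only [hpartsQ, Finset.mem_insert] at hx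
    tauto
  have hdisj : (partsQ : Set (Finset M)).PairwiseDisjoint id := by
    intro x hx y hy hxy
    have hx' := hmemQ x hx
    have hy' := hmemQ y hy
    have key : ∀ u v : Finset M, u = A1 ∨ u = A2 ∨ u ∈ Pstar.parts.erase A →
        v = A1 ∨ v = A2 ∨ v ∈ Pstar.parts.erase A → u ≠ v → Disjoint u v := by
      intro u v hu hv huv
      rcases hu with rfl | rfl | hu <;> rcases hv with rfl | rfl | hv
      · exact absurd rfl huv
      · exact hA1A2
      · exact Disjoint.mono_left hA1sub (hdisjA _ hv)
      · exact hA1A2.symm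
      · exact absurd rfl huv
      · exact Disjoint.mono_left hA2sub (hdisjA _ hv)
      · exact (Disjoint.mono_left hA1sub (hdisjA _ hu)).symm
      · exact (Disjoint.mono_left hA2sub (hdisjA _ hu)).symm
      · rw [Finset.mem_erase] at hu hv
        exact Pstar.disjoint hu.2 hv.2 huv
    exact key x y hx' hy' hxy
  have hsupold : A ⊔ (Pstar.parts.erase A).sup id = Finset.univ := by
    have := Pstar.sup_parts
    rwa [← Finset.insert_erase hA, Finset.sup_insert] at this
  have hsup : partsQ.sup id = Finset.univ := by
    simp only [hpartsQ, Finset.sup_insert]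
    rw [← sup_assoc]
    have : (id A1 ⊔ id A2 : Finset M) = A := by
      simpa using hunion
    rw [this]
    exact hsupold
  have hnotbot : ⊥ ∉ partsQ := by
    intro hbot
    rcases hmemQ _ hbot with h | h | h
    · exact absurd h.symm (Finset.singleton_ne_empty a)
    · exact absurd h.symm (Finset.nonempty_iff_ne_empty.mp hA2ne)
    · exact Pstar.bot_notMem (Finset.mem_erase.mp h).2
  set Q : Finpartition (Finset.univ : Finset M) :=
    ⟨partsQ, Finset.supIndep_iff_pairwiseDisjoint.mpr hdisj, hsup, hnotbot⟩ with hQdef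
  -- cardinality of Q
  have hA1neA2 : A1 ≠ A2 := by
    intro h
    have : a ∈ A2 := h ▸ Finset.mem_singleton_self a
    simp [hA2def] at this
  have hA1notin : A1 ∉ Pstar.parts.erase A := by
    intro h
    exact (Finset.disjoint_left.mp (hdisjA _ h) ha) (Finset.mem_singleton_self a)
  have hA2notin : A2 ∉ Pstar.parts.erase A := by
    intro h
    obtain ⟨b, hb⟩ := hA2ne
    exact (Finset.disjoint_left.mp (hdisjA _ h) (hA2sub hb)) hb
  have hQcard : Q.parts.card = Pstar.parts.card + 1 := by
    show partsQ.card = _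
    rw [hpartsQ, Finset.card_insert_of_notMem (by simp [hA1neA2, hA1notin]),
      Finset.card_insert_of_notMem hA2notin, Finset.card_erase_of_mem hA]
    omega
  -- the crossing sums agree
  set fP := Finset.univ.filter (fun e : Finset M => ¬ ∃ B ∈ Pstar.parts, e ⊆ B) with hfP
  set fQ := Finset.univ.filter (fun e : Finset M => ¬ ∃ B ∈ Q.parts, e ⊆ B) with hfQ
  have hsub : fP ⊆ fQ := by
    intro e he
    simp only [hfP, hfQ, Finset.mem_filter, Finset.mem_univ, true_and] at he ⊢
    intro ⟨c, hc, hec⟩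
    rcases hmemQ c hc with rfl | rfl | hc'
    · exact he ⟨A, hA, hec.trans hA1sub⟩
    · exact he ⟨A, hA, hec.trans hA2sub⟩
    · exact he ⟨c, (Finset.mem_erase.mp hc').2, hec⟩
  have hzero : ∀ e ∈ fQ, e ∉ fP → w e = 0 := by
    intro e heQ heP
    simp only [hfP, hfQ, Finset.mem_filter, Finset.mem_univ, true_and, not_not] at heQ heP
    obtain ⟨B, hB, heB⟩ := heP
    by_cases hBA : B = A
    · exact hw0 e (hBA ▸ heB)
    · exact absurd ⟨B, by simp [hQdef, hpartsQ, Finset.mem_erase, hBA, hB], heB⟩ heQ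
  have hsumeq : ∑ e ∈ fP, w e = ∑ e ∈ fQ, w e := Finset.sum_subset hsub hzero
  set S := ∑ e ∈ fP, w e with hS
  have hSnonneg : 0 ≤ S := Finset.sum_nonneg fun e _ => hw e
  have hIPP : IP w Pstar = ((Pstar.parts.card : ℝ) - 1)⁻¹ * S := rfl
  have hIPQ : IP w Q = ((Pstar.parts.card : ℝ) + 1 - 1)⁻¹ * S := by
    rw [IP, hQcard]
    push_cast
    congr 1
    exact hsumeq.symm
  have hc1 : (1 : ℝ) ≤ (Pstar.parts.card : ℝ) - 1 := by
    have : (2 : ℝ) ≤ (Pstar.parts.card : ℝ) := by exact_mod_cast hcard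
    linarith
  have hle : IP w Q ≤ IP w Pstar := by
    rw [hIPP, hIPQ]
    apply mul_le_mul_of_nonneg_right _ hSnonneg
    apply inv_anti₀ (by linarith)
    linarith
  have hQcard2 : 2 ≤ Q.parts.card := by omega
  have heq : IP w Q = IP w Pstar := le_antisymm hle (hmin Q hQcard2)
  -- Pstar refines Q, so A ⊆ some part of Q: contradiction
  obtain ⟨c, hc, hAc⟩ := hfinest Q hQcard2 heq hA
  rcases hmemQ c hc with rfl | rfl | hc'
  · have := Finset.card_le_card hAc
    simp [hA1def] at this
    omega
  · exact absurd (hAc ha) (Finset.notMem_erase a A)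
  · rw [Finset.mem_erase] at hc'
    exact (Finset.disjoint_left.mp (Pstar.disjoint hA hc'.2 (Ne.symm hc'.1)) ha) (hAc ha)
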